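/- arXiv:1904.11004 — 2 statements merged into one kernel-verified Lean document; each statement's English description precedes it below -/
import Mathlib

section
/- Let 1 ≤ n ≤ d be integers, C₀ ≥ 1 and c₁ > 0. There exist constants γ₀ ∈ (0,1) and C > 0, depending only on n, d, C₀ and c₁, with the following property. Let μ be a Radon measure on ℝ^d and B = B(z,r) a ball with μ(B) > 0 and μ(3.3B) ≤ C₀ μ(B), and suppose that some pair (c, L) with c ≥ 0 and L an affine n-plane intersecting 0.9B attains the infimum defining α_μ(1.1B). Let 0 < γ ≤ γ₀ and suppose there is a countable family of balls {B_i}_{i∈I}, each of radius 4γr and centered at a point of B, such that the balls {10B_i}_{i∈I} are pairwise disjoint, Σ_{i∈I} μ(B_i) ≥ c₁ μ(B), and Θ_μ(B_i) ≥ c₁ γ^{-1} Θ_μ(B) for every i ∈ I. Then α_μ(1.1B) > Cγ. -/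
open MeasureTheory Metric Set

noncomputable section

abbrev Euc (d : ℕ) : Type := EuclideanSpace ℝ (Fin d)

/-- An affine `n`-plane: a nonempty affine subspace whose direction has dimension `n`. -/
def IsAffinePlane {d : ℕ} (n : ℕ) (L : AffineSubspace ℝ (Euc d)) : Prop :=
  (L : Set (Euc d)).Nonempty ∧ Module.finrank ℝ L.direction = n

/-- The quantity inside the infimum defining `β_{μ,p}(x,r)`, for a given plane `L`. -/
noncomputable def betaVal {d : ℕ} (p : ℝ) (μ : Measure (Euc d)) (x : Euc d) (r : ℝ)
    (L : AffineSubspace ℝ (Euc d)) : ℝ :=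
  ((μ (ball x (3 * r))).toReal⁻¹ *
    ∫ y in ball x r, (Metric.infDist y (L : Set (Euc d)) / r) ^ p ∂μ) ^ (1 / p)

/-- The coefficient `β_{μ,p}(x,r)`: the infimum is over affine `n`-planes meeting `B(x,r)`. -/
noncomputable def betaCoef {d : ℕ} (n : ℕ) (p : ℝ) (μ : Measure (Euc d)) (x : Euc d)
    (r : ℝ) : ℝ :=
  sInf { b | ∃ L : AffineSubspace ℝ (Euc d), IsAffinePlane n L ∧
    ((L : Set (Euc d)) ∩ ball x r).Nonempty ∧ b = betaVal p μ x r L }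

/-- `Lip₁(B)`: 1-Lipschitz functions supported inside `B`. -/
def Lip1 {d : ℕ} (B : Set (Euc d)) : Set (Euc d → ℝ) :=
  { φ | LipschitzWith 1 φ ∧ tsupport φ ⊆ B }

/-- `F_B(μ,ν) = sup { |∫φ dμ − ∫φ dν| : φ ∈ Lip₁(B) }`. -/
noncomputable def Fdist {d : ℕ} (B : Set (Euc d)) (μ ν : Measure (Euc d)) : ℝ :=
  sSup { t | ∃ φ ∈ Lip1 B, t = |(∫ x, φ x ∂μ) - ∫ x, φ x ∂ν| }

/-- The flat measure `c · H^n|_L`. -/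
noncomputable def flatMeasure {d : ℕ} (n : ℕ) (c : ℝ) (L : AffineSubspace ℝ (Euc d)) :
    Measure (Euc d) :=
  ENNReal.ofReal c • (μH[(n : ℝ)]).restrict (L : Set (Euc d))

/-- The quantity inside the infimum defining `α_μ(x,r)`, for a given `c ≥ 0` and plane `L`. -/
noncomputable def alphaVal {d : ℕ} (n : ℕ) (μ : Measure (Euc d)) (x : Euc d) (r : ℝ)
    (c : ℝ) (L : AffineSubspace ℝ (Euc d)) : ℝ :=
  Fdist (ball x r) μ (flatMeasure n c L) / (r * (μ (ball x (3 * r))).toReal)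

/-- The coefficient `α_μ(x,r)`. -/
noncomputable def alphaCoef {d : ℕ} (n : ℕ) (μ : Measure (Euc d)) (x : Euc d) (r : ℝ) : ℝ :=
  sInf { a | ∃ c : ℝ, 0 ≤ c ∧ ∃ L : AffineSubspace ℝ (Euc d), IsAffinePlane n L ∧
    a = alphaVal n μ x r c L }

/-- `μ` is `n`-rectifiable: `μ ≪ H^n` and `μ`-a.a. of the space is covered by countably
many Lipschitz images of `ℝ^n`. -/
def IsNRectifiable {d : ℕ} (n : ℕ) (μ : Measure (Euc d)) : Prop :=
  μ ≪ μH[(n : ℝ)] ∧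
  ∃ f : ℕ → Euc n → Euc d,
    (∀ i, ∃ K : NNReal, LipschitzWith K (f i)) ∧
    μ (Set.univ \ ⋃ i, Set.range (f i)) = 0

/-- The `n`-dimensional density `Θ_μ(B) = μ(B)/r(B)^n` of a ball `B = B(x,r)`. -/
noncomputable def density {d : ℕ} (n : ℕ) (μ : Measure (Euc d)) (x : Euc d) (r : ℝ) : ℝ :=
  (μ (ball x r)).toReal / r ^ n


open scoped ENNReal NNReal

/-! ### Auxiliary lemmas -/

def VB (n : ℕ) : ℝ≥0∞ := μH[(n:ℝ)] (ball (0 : Euc n) 1)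

lemma muH_pi_eq (n : ℕ) : (μH[(n:ℝ)] : Measure (Fin n → ℝ)) = volume := by
  have := hausdorffMeasure_pi_real (ι := Fin n)
  simpa using this

lemma VB_lt_top (n : ℕ) : VB n < ⊤ := by
  set K : ℝ≥0 := (Fintype.card (Fin n) : ℝ≥0) ^ ((1:ℝ≥0∞)/2).toReal with hK
  have hanti : AntilipschitzWith K (WithLp.equiv 2 (Fin n → ℝ)) :=
    PiLp.antilipschitzWith_ofLp 2 _
  have hlip : LipschitzWith 1 (WithLp.equiv 2 (Fin n → ℝ)) := PiLp.lipschitzWith_ofLp 2 _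
  have h1 : VB n ≤ (K : ℝ≥0∞) ^ (n:ℝ) *
      μH[(n:ℝ)] ((WithLp.equiv 2 (Fin n → ℝ)) '' (ball (0 : Euc n) 1)) :=
    hanti.le_hausdorffMeasure_image (by positivity) _
  have h2 : (WithLp.equiv 2 (Fin n → ℝ)) '' (ball (0 : Euc n) 1) ⊆ ball 0 1 := by
    rintro y ⟨x, hx, rfl⟩
    have := hlip.dist_le_mul x 0
    simp only [NNReal.coe_one, one_mul] at this
    have h0 : (WithLp.equiv 2 (Fin n → ℝ)) 0 = 0 := rfl
    rw [mem_ball, ← h0]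
    exact lt_of_le_of_lt this (by simpa using hx)
  have h3 : VB n ≤ (K : ℝ≥0∞) ^ (n:ℝ) * μH[(n:ℝ)] (ball (0 : Fin n → ℝ) 1) :=
    h1.trans (mul_le_mul_right (measure_mono h2) _)
  rw [muH_pi_eq n] at h3
  exact lt_of_le_of_lt h3 (ENNReal.mul_lt_top
    (ENNReal.rpow_lt_top_of_nonneg (by positivity) ENNReal.coe_ne_top) measure_ball_lt_top)

lemma VB_pos (n : ℕ) (hn : 1 ≤ n) : 0 < VB n := by
  set K : ℝ≥0 := (Fintype.card (Fin n) : ℝ≥0) ^ ((1:ℝ≥0∞)/2).toReal with hK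
  have hKpos : 0 < K := by
    rw [hK]
    apply NNReal.rpow_pos
    simp only [Fintype.card_fin]
    exact_mod_cast Nat.pos_of_ne_zero (by omega)
  have hanti : AntilipschitzWith K (WithLp.equiv 2 (Fin n → ℝ)) :=
    PiLp.antilipschitzWith_ofLp 2 _
  have hlip : LipschitzWith 1 (WithLp.equiv 2 (Fin n → ℝ)) := PiLp.lipschitzWith_ofLp 2 _
  have hsub : ball (0 : Fin n → ℝ) ((K:ℝ)⁻¹) ⊆
      (WithLp.equiv 2 (Fin n → ℝ)) '' (ball (0 : Euc n) 1) := by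
    intro y hy
    refine ⟨(WithLp.equiv 2 (Fin n → ℝ)).symm y, ?_, by simp⟩
    rw [mem_ball]
    have h0 : (WithLp.equiv 2 (Fin n → ℝ)) ((WithLp.equiv 2 (Fin n → ℝ)).symm y) = y := by simp
    have := hanti.le_mul_dist ((WithLp.equiv 2 (Fin n → ℝ)).symm y) 0
    have h00 : (WithLp.equiv 2 (Fin n → ℝ)) (0 : Euc n) = 0 := rfl
    rw [h0, h00] at this
    refine lt_of_le_of_lt this ?_
    rw [mem_ball] at hy
    calc (K:ℝ) * dist y 0 < (K:ℝ) * (K:ℝ)⁻¹ := by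
          exact mul_lt_mul_of_pos_left hy (by exact_mod_cast hKpos)
      _ = 1 := by field_simp
  have h1 : μH[(n:ℝ)] ((WithLp.equiv 2 (Fin n → ℝ)) '' (ball (0 : Euc n) 1)) ≤
      (1:ℝ≥0∞) ^ (n:ℝ) * μH[(n:ℝ)] (ball (0 : Euc n) 1) :=
    hlip.hausdorffMeasure_image_le (by positivity) _
  have h2 : (0:ℝ≥0∞) < μH[(n:ℝ)] (ball (0 : Fin n → ℝ) ((K:ℝ)⁻¹)) := by
    rw [muH_pi_eq n]
    exact measure_ball_pos _ _ (by exact inv_pos.2 (by exact_mod_cast hKpos))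
  calc (0:ℝ≥0∞) < μH[(n:ℝ)] (ball (0 : Fin n → ℝ) ((K:ℝ)⁻¹)) := h2
    _ ≤ μH[(n:ℝ)] ((WithLp.equiv 2 (Fin n → ℝ)) '' (ball (0 : Euc n) 1)) := measure_mono hsub
    _ ≤ (1:ℝ≥0∞) ^ (n:ℝ) * μH[(n:ℝ)] (ball (0 : Euc n) 1) := h1
    _ = VB n := by rw [ENNReal.one_rpow, one_mul, VB]

lemma hausdorff_ball_scale (n : ℕ) {ρ : ℝ} (hρ : 0 < ρ) :
    μH[(n:ℝ)] (ball (0 : Euc n) ρ) = ENNReal.ofReal (ρ^n) * VB n := by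
  rw [← smul_unitBall_of_pos hρ,
    Measure.hausdorffMeasure_smul₀ (by positivity) hρ.ne' (ball (0:Euc n) 1)]
  rw [ENNReal.smul_def, smul_eq_mul]
  congr 1
  rw [ENNReal.coe_rpow_of_nonneg _ (by positivity), ← Real.rpow_natCast ρ n,
    ← ENNReal.ofReal_rpow_of_pos hρ]
  congr 1
  simp [Real.nnnorm_of_nonneg hρ.le, ENNReal.ofReal]
  ext
  simp [Real.toNNReal_of_nonneg hρ.le]

lemma plane_inter_ball_hausdorff {d n : ℕ} (L : AffineSubspace ℝ (Euc d))
    (hL : Module.finrank ℝ L.direction = n) {p : Euc d} (hp : p ∈ L) (ρ : ℝ) :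
    μH[(n:ℝ)] ((L : Set (Euc d)) ∩ ball p ρ) = μH[(n:ℝ)] (ball (0 : Euc n) ρ) := by
  let e : EuclideanSpace ℝ (Fin n) ≃ₗᵢ[ℝ] L.direction :=
    ((stdOrthonormalBasis ℝ L.direction).reindex (finCongr hL)).repr.symm
  set f : Euc n → Euc d := fun v => p + (e v : Euc d) with hf
  have hiso : Isometry f := by
    intro u v
    simp only [hf, edist_add_left]
    rw [show ((e u : Euc d)) = (Submodule.subtypeₗᵢ L.direction) (e u) from rfl,
      show ((e v : Euc d)) = (Submodule.subtypeₗᵢ L.direction) (e v) from rfl]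
    rw [(Submodule.subtypeₗᵢ L.direction).isometry.edist_eq, e.isometry.edist_eq]
  have himg : f '' (ball (0 : Euc n) ρ) = (L : Set (Euc d)) ∩ ball p ρ := by
    ext x
    constructor
    · rintro ⟨v, hv, rfl⟩
      refine ⟨?_, ?_⟩
      · have : ((e v : Euc d)) +ᵥ p ∈ L :=
          AffineSubspace.vadd_mem_of_mem_direction (e v).2 hp
        simpa [hf, add_comm] using this
      · rw [mem_ball, hf]
        have : dist (p + (e v : Euc d)) p = ‖v‖ := by
          rw [dist_eq_norm]
          simp only [add_sub_cancel_left]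
          rw [show ‖((e v : Euc d))‖ = ‖e v‖ from rfl, e.norm_map]
        rw [this]
        simpa using hv
    · rintro ⟨hxL, hxB⟩
      have hw : x - p ∈ L.direction := by
        have := AffineSubspace.vsub_mem_direction hxL hp
        simpa using this
      refine ⟨e.symm ⟨x - p, hw⟩, ?_, ?_⟩
      · rw [mem_ball]
        have : ‖e.symm ⟨x - p, hw⟩‖ = ‖x - p‖ := by
          rw [e.symm.norm_map]
          rfl
        rw [dist_zero_right, this, ← dist_eq_norm]
        exact hxB
      · simp only [hf, LinearIsometryEquiv.apply_symm_apply]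
        abel
  rw [← himg, hiso.hausdorffMeasure_image (Or.inl (by positivity))]

lemma lip1_abs_le {d : ℕ} (hd : 0 < d) {z : Euc d} {R : ℝ} (hR : 0 ≤ R) {φ : Euc d → ℝ}
    (hφ : φ ∈ Lip1 (ball z R)) (x : Euc d) : |φ x| ≤ R := by
  by_cases hx : φ x = 0
  · rw [hx]; simpa using hR
  have hmem : x ∈ ball z R := hφ.2 (subset_tsupport φ hx)
  rw [mem_ball] at hmem
  have hRpos : 0 < R := lt_of_le_of_lt dist_nonneg hmem
  have key : ∀ w : Euc d, dist w z = R → |φ x| ≤ dist x w := by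
    intro w hw
    have hw0 : φ w = 0 := by
      apply image_eq_zero_of_notMem_tsupport
      intro hmem'
      have := hφ.2 hmem'
      rw [mem_ball, hw] at this
      exact lt_irrefl _ this
    have := hφ.1.dist_le_mul x w
    rw [NNReal.coe_one, one_mul, Real.dist_eq, hw0, sub_zero] at this
    exact this
  by_cases hxz : x = z
  · set u : Euc d := EuclideanSpace.single (⟨0, hd⟩ : Fin d) (1:ℝ) with hu
    have hnu : ‖u‖ = 1 := by rw [hu, EuclideanSpace.norm_single]; simp
    have h1 : dist (z + R • u) z = R := by
      rw [dist_eq_norm, add_sub_cancel_left, norm_smul, hnu]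
      simp [abs_of_pos hRpos]
    have := key (z + R • u) h1
    rw [hxz] at this ⊢
    calc |φ z| ≤ dist z (z + R • u) := this
      _ = R := by rw [dist_comm]; exact h1
  · set t := dist x z with ht
    have htpos : 0 < t := dist_pos.2 hxz
    set w : Euc d := z + (R / t) • (x - z) with hw
    have h1 : dist w z = R := by
      rw [hw, dist_eq_norm, add_sub_cancel_left, norm_smul]
      rw [show ‖x - z‖ = t from by rw [ht, dist_eq_norm]]
      rw [Real.norm_eq_abs, abs_of_pos (by positivity)]
      field_simp
    have h2 : dist x w = R - t := by
      rw [hw, dist_eq_norm]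
      have : x - (z + (R / t) • (x - z)) = (1 - R / t) • (x - z) := by
        rw [sub_smul, one_smul, smul_sub]; abel_nf
      rw [this, norm_smul, show ‖x - z‖ = t from by rw [ht, dist_eq_norm]]
      rw [Real.norm_eq_abs, abs_of_nonpos (by
        have : R / t > 1 := (one_lt_div htpos).2 hmem
        linarith)]
      field_simp
      ring
    calc |φ x| ≤ dist x w := key w h1
      _ = R - t := h2
      _ ≤ R := by linarith

lemma lip1_support_subset {d : ℕ} {z : Euc d} {R : ℝ} {φ : Euc d → ℝ}
    (hφ : φ ∈ Lip1 (ball z R)) : (ball z R).indicator φ = φ :=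
  indicator_eq_self.2 ((subset_tsupport φ).trans hφ.2)

lemma lip1_integrable {d : ℕ} (hd : 0 < d) {z : Euc d} {R : ℝ} (hR : 0 ≤ R) {φ : Euc d → ℝ}
    (hφ : φ ∈ Lip1 (ball z R)) (ν : Measure (Euc d)) (hν : ν (ball z R) ≠ ⊤) :
    Integrable φ ν := by
  rw [← lip1_support_subset hφ, integrable_indicator_iff measurableSet_ball]
  exact Measure.integrableOn_of_bounded hν hφ.1.continuous.aestronglyMeasurable
    (Filter.Eventually.of_forall fun x => by
      rw [Real.norm_eq_abs]; exact lip1_abs_le hd hR hφ x)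

lemma lip1_integral_abs_le {d : ℕ} (hd : 0 < d) {z : Euc d} {R : ℝ} (hR : 0 ≤ R)
    {φ : Euc d → ℝ} (hφ : φ ∈ Lip1 (ball z R)) (ν : Measure (Euc d))
    (hν : ν (ball z R) ≠ ⊤) :
    |∫ x, φ x ∂ν| ≤ R * (ν (ball z R)).toReal := by
  conv_lhs => rw [← lip1_support_subset hφ]
  rw [integral_indicator measurableSet_ball, ← Real.norm_eq_abs]
  exact norm_setIntegral_le_of_norm_le_const (lt_top_iff_ne_top.2 hν)
    (fun x _ => by rw [Real.norm_eq_abs]; exact lip1_abs_le hd hR hφ x)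

lemma Fdist_bddAbove {d : ℕ} (hd : 0 < d) {z : Euc d} {R : ℝ} (hR : 0 ≤ R)
    (μ ν : Measure (Euc d)) (hμ : μ (ball z R) ≠ ⊤) (hν : ν (ball z R) ≠ ⊤) :
    BddAbove { t | ∃ φ ∈ Lip1 (ball z R), t = |(∫ x, φ x ∂μ) - ∫ x, φ x ∂ν| } := by
  refine ⟨R * (μ (ball z R)).toReal + R * (ν (ball z R)).toReal, ?_⟩
  rintro t ⟨φ, hφ, rfl⟩
  calc |(∫ x, φ x ∂μ) - ∫ x, φ x ∂ν| ≤ |∫ x, φ x ∂μ| + |∫ x, φ x ∂ν| := abs_sub _ _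
    _ ≤ R * (μ (ball z R)).toReal + R * (ν (ball z R)).toReal :=
        add_le_add (lip1_integral_abs_le hd hR hφ μ hμ) (lip1_integral_abs_le hd hR hφ ν hν)

lemma le_Fdist {d : ℕ} (hd : 0 < d) {z : Euc d} {R : ℝ} (hR : 0 ≤ R)
    (μ ν : Measure (Euc d)) (hμ : μ (ball z R) ≠ ⊤) (hν : ν (ball z R) ≠ ⊤)
    {ψ : Euc d → ℝ} (hψ : ψ ∈ Lip1 (ball z R)) :
    |(∫ x, ψ x ∂μ) - ∫ x, ψ x ∂ν| ≤ Fdist (ball z R) μ ν :=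
  le_csSup (Fdist_bddAbove hd hR μ ν hμ hν) ⟨ψ, hψ, rfl⟩

lemma Fdist_le {d : ℕ} {z : Euc d} {R : ℝ} (μ ν : Measure (Euc d)) {M : ℝ} (hM : 0 ≤ M)
    (h : ∀ φ ∈ Lip1 (ball z R), |(∫ x, φ x ∂μ) - ∫ x, φ x ∂ν| ≤ M) :
    Fdist (ball z R) μ ν ≤ M := by
  apply Real.sSup_le _ hM
  rintro t ⟨φ, hφ, rfl⟩
  exact h φ hφ

lemma Fdist_nonneg {d : ℕ} (hd : 0 < d) {z : Euc d} {R : ℝ} (hR : 0 ≤ R)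
    (μ ν : Measure (Euc d)) (hμ : μ (ball z R) ≠ ⊤) (hν : ν (ball z R) ≠ ⊤) :
    0 ≤ Fdist (ball z R) μ ν := by
  have h0 : (fun _ : Euc d => (0:ℝ)) ∈ Lip1 (ball z R) := by
    constructor
    · exact LipschitzWith.const' 0
    · have : tsupport (fun _ : Euc d => (0:ℝ)) = ∅ := by
        simp [tsupport, Function.support]
      rw [this]; exact empty_subset _
  have := le_Fdist hd hR μ ν hμ hν h0
  simp only [integral_zero] at this
  simpa using this.trans' (abs_nonneg _)

lemma flatMeasure_apply {d n : ℕ} (c : ℝ) (L : AffineSubspace ℝ (Euc d)) {s : Set (Euc d)}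
    (hs : MeasurableSet s) :
    flatMeasure n c L s = ENNReal.ofReal c * μH[(n:ℝ)] (s ∩ (L : Set (Euc d))) := by
  rw [flatMeasure, Measure.smul_apply, Measure.restrict_apply hs, smul_eq_mul]

lemma flatMeasure_ball_le {d n : ℕ} {L : AffineSubspace ℝ (Euc d)}
    (hL : Module.finrank ℝ L.direction = n) (c : ℝ) (x : Euc d) {ρ : ℝ} (hρ : 0 < ρ) :
    flatMeasure n c L (ball x ρ) ≤
      ENNReal.ofReal c * (ENNReal.ofReal ((2*ρ)^n) * VB n) := by
  rw [flatMeasure_apply c L measurableSet_ball]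
  by_cases h : ((L : Set (Euc d)) ∩ ball x ρ).Nonempty
  · obtain ⟨q, hqL, hqB⟩ := h
    have hsub : ball x ρ ∩ (L : Set (Euc d)) ⊆ (L : Set (Euc d)) ∩ ball q (2*ρ) := by
      rintro y ⟨hyB, hyL⟩
      refine ⟨hyL, ?_⟩
      rw [mem_ball] at *
      calc dist y q ≤ dist y x + dist x q := dist_triangle _ _ _
        _ < ρ + ρ := add_lt_add hyB (by rw [dist_comm]; exact hqB)
        _ = 2*ρ := by ring
    refine mul_le_mul_right ?_ _
    calc μH[(n:ℝ)] (ball x ρ ∩ (L : Set (Euc d)))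
        ≤ μH[(n:ℝ)] ((L : Set (Euc d)) ∩ ball q (2*ρ)) := measure_mono hsub
      _ = μH[(n:ℝ)] (ball (0 : Euc n) (2*ρ)) :=
          plane_inter_ball_hausdorff L hL hqL _
      _ = ENNReal.ofReal ((2*ρ)^n) * VB n := hausdorff_ball_scale n (by linarith)
  · have : ball x ρ ∩ (L : Set (Euc d)) = ∅ := by
      rw [not_nonempty_iff_eq_empty] at h
      rw [inter_comm]; exact h
    rw [this, measure_empty, mul_zero]
    exact zero_le

lemma flatMeasure_ball_center {d n : ℕ} {L : AffineSubspace ℝ (Euc d)}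
    (hL : Module.finrank ℝ L.direction = n) (c : ℝ) {p : Euc d} (hp : p ∈ L) {ρ : ℝ}
    (hρ : 0 < ρ) :
    flatMeasure n c L (ball p ρ) = ENNReal.ofReal c * (ENNReal.ofReal (ρ^n) * VB n) := by
  rw [flatMeasure_apply c L measurableSet_ball, inter_comm,
    plane_inter_ball_hausdorff L hL hp, hausdorff_ball_scale n hρ]

lemma flatMeasure_ball_ne_top {d n : ℕ} {L : AffineSubspace ℝ (Euc d)}
    (hL : Module.finrank ℝ L.direction = n) (c : ℝ) (x : Euc d) (ρ : ℝ) :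
    flatMeasure n c L (ball x ρ) ≠ ⊤ := by
  rcases le_or_gt ρ 0 with h | h
  · rw [ball_eq_empty.2 h, measure_empty]; exact ENNReal.zero_ne_top
  · exact ne_top_of_le_ne_top
      (ENNReal.mul_ne_top ENNReal.ofReal_ne_top
        (ENNReal.mul_ne_top ENNReal.ofReal_ne_top (VB_lt_top n).ne))
      (flatMeasure_ball_le hL c x h)

/-! ### Bump functions -/

def bump {d : ℕ} (a : ℝ) (p : Euc d) (y : Euc d) : ℝ := max 0 (min a (2*a - dist y p))

lemma bump_nonneg {d : ℕ} (a : ℝ) (p y : Euc d) : 0 ≤ bump a p y := le_max_left _ _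

lemma bump_le {d : ℕ} {a : ℝ} (ha : 0 ≤ a) (p y : Euc d) : bump a p y ≤ a :=
  max_le ha (min_le_left _ _)

lemma lip_bump {d : ℕ} (a : ℝ) (p : Euc d) : LipschitzWith 1 (bump a p) := by
  have h1 : LipschitzWith 1 (fun y : Euc d => 2*a - dist y p) := by
    apply LipschitzWith.of_dist_le_mul
    intro x y
    have := (LipschitzWith.dist_left (α := Euc d) p).dist_le_mul x y
    rw [NNReal.coe_one, one_mul, Real.dist_eq] at this ⊢
    rw [show 2*a - dist x p - (2*a - dist y p) = -(dist x p - dist y p) by ring, abs_neg]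
    exact this
  exact (h1.const_min a).const_max 0

lemma bump_eq_zero {d : ℕ} {a : ℝ} {p y : Euc d} (h : 2*a ≤ dist y p) : bump a p y = 0 := by
  rw [bump, max_eq_left]
  exact le_trans (min_le_right _ _) (by linarith)

lemma bump_eq_of_close {d : ℕ} {a : ℝ} (ha : 0 ≤ a) {p y : Euc d} (h : dist y p < a) :
    bump a p y = a := by
  rw [bump, min_eq_left (by linarith), max_eq_right ha]

lemma bump_support {d : ℕ} {a : ℝ} {p y : Euc d} (h : bump a p y ≠ 0) : dist y p < 2*a := by
  by_contra hc
  exact h (bump_eq_zero (not_lt.1 hc))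

lemma lip_bump_sum {d : ℕ} {ι : Type} (J : Finset ι) (x : ι → Euc d) {a : ℝ} (ha : 0 ≤ a)
    (hsep : ∀ i ∈ J, ∀ j ∈ J, i ≠ j → 4*a ≤ dist (x i) (x j)) :
    LipschitzWith 1 (fun y => ∑ i ∈ J, bump a (x i) y) := by
  have key : ∀ y y' : Euc d, (∑ i ∈ J, bump a (x i) y) - (∑ i ∈ J, bump a (x i) y')
      ≤ dist y y' := by
    intro y y'
    by_cases hy : ∀ i ∈ J, bump a (x i) y = 0
    · rw [Finset.sum_eq_zero hy]
      have h1 : 0 ≤ ∑ i ∈ J, bump a (x i) y' :=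
        Finset.sum_nonneg fun i _ => bump_nonneg a (x i) y'
      have := dist_nonneg (x := y) (y := y')
      linarith
    · push_neg at hy
      obtain ⟨i, hiJ, hi⟩ := hy
      have hyi : dist y (x i) < 2*a := bump_support hi
      have hsum : (∑ j ∈ J, bump a (x j) y) = bump a (x i) y := by
        apply Finset.sum_eq_single_of_mem i hiJ
        intro j hjJ hji
        apply bump_eq_zero
        have h4 : 4*a ≤ dist (x j) (x i) := hsep j hjJ i hiJ hji
        calc 2*a = 4*a - 2*a := by ring
          _ ≤ dist (x j) (x i) - dist y (x i) := by linarith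
          _ ≤ dist y (x j) := by
              have := dist_triangle (x j) y (x i)
              rw [dist_comm (x j) y] at this
              linarith
      have hsum' : bump a (x i) y' ≤ ∑ j ∈ J, bump a (x j) y' :=
        Finset.single_le_sum (fun j _ => bump_nonneg a (x j) y') hiJ
      have hlip := (lip_bump a (x i)).dist_le_mul y y'
      rw [NNReal.coe_one, one_mul, Real.dist_eq] at hlip
      have := abs_le.1 hlip
      rw [hsum]
      linarith [this.2]
  apply LipschitzWith.of_dist_le_mul
  intro y y'
  rw [NNReal.coe_one, one_mul, Real.dist_eq, abs_le]
  constructor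
  · have := key y' y
    rw [dist_comm] at this
    linarith
  · linarith [key y y']


lemma two_radius_le_dist_of_disjoint {d : ℕ} {p q : Euc d} {R : ℝ} (hR : 0 < R)
    (h : Disjoint (ball p R) (ball q R)) : 2*R ≤ dist p q := by
  by_contra hlt
  push_neg at hlt
  have hm1 : midpoint ℝ p q ∈ ball p R := by
    rw [mem_ball, dist_comm, dist_left_midpoint (𝕜 := ℝ)]
    rw [Real.norm_two]
    linarith
  have hm2 : midpoint ℝ p q ∈ ball q R := by
    rw [mem_ball, dist_midpoint_right (𝕜 := ℝ)]
    rw [Real.norm_two]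
    linarith
  exact Set.disjoint_left.1 h hm1 hm2

set_option maxHeartbeats 2000000 in
/-- If a ball `B` admits a family of small dense balls as in the
unbalanced alternative of the balanced-balls lemma (with constant `c₁`), then
`α_μ(1.1B) > Cγ`, where `γ₀, C` depend only on `n, d, C₀, c₁`. -/
theorem statement14 (n d : ℕ) (hn : 1 ≤ n) (hnd : n ≤ d) (C₀ c₁ : ℝ)
    (hC₀ : 1 ≤ C₀) (hc₁ : 0 < c₁) :
    ∃ γ₀ ∈ Ioo (0 : ℝ) 1, ∃ C > (0 : ℝ),
      ∀ (μ : Measure (Euc d)), IsLocallyFiniteMeasure μ →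
      ∀ (z : Euc d) (r : ℝ), 0 < r → 0 < μ (ball z r) →
        μ (ball z (3.3 * r)) ≤ ENNReal.ofReal C₀ * μ (ball z r) →
      ∀ (c : ℝ) (L : AffineSubspace ℝ (Euc d)), 0 ≤ c → IsAffinePlane n L →
        ((L : Set (Euc d)) ∩ ball z (0.9 * r)).Nonempty →
        alphaVal n μ z (1.1 * r) c L = alphaCoef n μ z (1.1 * r) →
      ∀ γ : ℝ, 0 < γ → γ ≤ γ₀ →
      ∀ (ι : Type), Countable ι →
      ∀ x : ι → Euc d,
        (∀ i, x i ∈ ball z r) →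
        (Pairwise fun i j =>
          Disjoint (ball (x i) (10 * (4 * γ * r))) (ball (x j) (10 * (4 * γ * r)))) →
        ENNReal.ofReal c₁ * μ (ball z r) ≤ ∑' i, μ (ball (x i) (4 * γ * r)) →
        (∀ i, c₁ * γ⁻¹ * density n μ z r ≤ density n μ (x i) (4 * γ * r)) →
        C * γ < alphaCoef n μ z (1.1 * r) := by
  classical
  have hd : 0 < d := lt_of_lt_of_le hn hnd
  have hC₀0 : (0:ℝ) < C₀ := lt_of_lt_of_le one_pos hC₀
  set v : ℝ := (VB n).toReal with hvdef
  have hv : 0 < v := ENNReal.toReal_pos (VB_pos n hn).ne' (VB_lt_top n).ne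
  set K₈ : ℝ := 22*C₀*40^n/c₁ with hK₈def
  have hK₈ : 0 < K₈ := by positivity
  set K₇ : ℝ := K₈ * C₀ with hK₇def
  have hK₇ : 0 < K₇ := by positivity
  refine ⟨min (1/100) (c₁/(4*K₇)), ⟨lt_min (by norm_num) (by positivity),
    lt_of_le_of_lt (min_le_left _ _) (by norm_num)⟩, c₁/(2*C₀), by positivity, ?_⟩
  intro μ hloc z r hr hμB hμ33 c L hc hLplane hLmeet hattain γ hγ hγγ₀ ι hι x hxB hdisj
    htsum hdens
  haveI := hloc
  have hγ100 : γ ≤ 1/100 := hγγ₀.trans (min_le_left _ _)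
  have hγK₇ : K₇ * γ ≤ c₁/4 := by
    calc K₇ * γ = γ * K₇ := by ring
      _ ≤ c₁/(4*K₇) * K₇ :=
          mul_le_mul_of_nonneg_right (hγγ₀.trans (min_le_right _ _)) hK₇.le
      _ = c₁/4 := by field_simp
  have hball_fin : ∀ (w : Euc d) (ρ : ℝ), μ (ball w ρ) ≠ ⊤ := fun w ρ =>
    ((measure_mono ball_subset_closedBall).trans_lt
      (isCompact_closedBall w ρ).measure_lt_top).ne
  set ν : Measure (Euc d) := flatMeasure n c L with hνdef
  have hνfin : ∀ (w : Euc d) (ρ : ℝ), ν (ball w ρ) ≠ ⊤ := fun w ρ =>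
    flatMeasure_ball_ne_top hLplane.2 c w ρ
  set M : ℝ := (μ (ball z r)).toReal with hMdef
  have hM : 0 < M := ENNReal.toReal_pos hμB.ne' (hball_fin z r)
  set N : ℝ := (μ (ball z (3.3*r))).toReal with hNdef
  have hMN : M ≤ N := ENNReal.toReal_mono (hball_fin z _)
    (measure_mono (ball_subset_ball (by linarith)))
  have hN : 0 < N := lt_of_lt_of_le hM hMN
  have hNC₀M : N ≤ C₀ * M := by
    have h1 : (ENNReal.ofReal C₀ * μ (ball z r)).toReal = C₀ * M := by
      rw [ENNReal.toReal_mul, ENNReal.toReal_ofReal hC₀0.le]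
    rw [← h1]
    exact ENNReal.toReal_mono
      (ENNReal.mul_ne_top ENNReal.ofReal_ne_top (hball_fin z r)) hμ33
  have hr1 : (0:ℝ) < 1.1 * r := by linarith
  set F : ℝ := Fdist (ball z (1.1*r)) μ ν with hFdef
  set A : ℝ := alphaCoef n μ z (1.1*r) with hAdef
  have h33 : (3:ℝ)*(1.1*r) = 3.3*r := by ring
  have hval : alphaVal n μ z (1.1*r) c L = F / ((1.1*r) * N) := by
    rw [alphaVal, h33]
  have hAF : A = F / ((1.1*r) * N) := by rw [← hattain]; exact hval
  have hSet_nonneg : ∀ a ∈ { a | ∃ c' : ℝ, 0 ≤ c' ∧ ∃ L' : AffineSubspace ℝ (Euc d),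
      IsAffinePlane n L' ∧ a = alphaVal n μ z (1.1*r) c' L' }, (0:ℝ) ≤ a := by
    rintro a ⟨c', hc', L', hL', rfl⟩
    rw [alphaVal]
    apply div_nonneg _ (by positivity)
    exact Fdist_nonneg hd hr1.le μ _ (hball_fin z _) (flatMeasure_ball_ne_top hL'.2 c' z _)
  have hA1 : A ≤ 1 := by
    have hmem : alphaVal n μ z (1.1*r) 0 L ∈ { a | ∃ c' : ℝ, 0 ≤ c' ∧
        ∃ L' : AffineSubspace ℝ (Euc d), IsAffinePlane n L' ∧
        a = alphaVal n μ z (1.1*r) c' L' } := ⟨0, le_refl 0, L, hLplane, rfl⟩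
    have hle : A ≤ alphaVal n μ z (1.1*r) 0 L := csInf_le ⟨0, hSet_nonneg⟩ hmem
    refine hle.trans ?_
    have hflat0 : flatMeasure n (0:ℝ) L = (0 : Measure (Euc d)) := by
      rw [flatMeasure, ENNReal.ofReal_zero, zero_smul]
    rw [alphaVal, h33, hflat0]
    rw [div_le_one (by positivity)]
    apply Fdist_le μ 0 (by positivity)
    intro φ hφ
    simp only [integral_zero_measure, sub_zero]
    calc |∫ y, φ y ∂μ| ≤ (1.1*r) * (μ (ball z (1.1*r))).toReal :=
          lip1_integral_abs_le hd hr1.le hφ μ (hball_fin z _)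
      _ ≤ (1.1*r) * N := by
          apply mul_le_mul_of_nonneg_left _ hr1.le
          exact ENNReal.toReal_mono (hball_fin z _)
            (measure_mono (ball_subset_ball (by linarith)))
  have hFeq : F = A * ((1.1*r) * N) := by
    have h1 := hAF
    rw [eq_comm, div_eq_iff (by positivity : (1.1*r) * N ≠ 0)] at h1
    exact h1
  have hFle : F ≤ (1.1*r) * N := by
    rw [hFeq]
    nlinarith [mul_le_mul_of_nonneg_right hA1 (mul_pos hr1 hN).le]
  obtain ⟨q, hqL, hqB⟩ := hLmeet
  have hqB' : dist q z < 0.9*r := mem_ball.1 hqB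
  have hφq : bump (0.1*r) q ∈ Lip1 (ball z (1.1*r)) := by
    refine ⟨lip_bump _ q, ?_⟩
    have hsupp : Function.support (bump (0.1*r) q) ⊆ closedBall q (2*(0.1*r)) :=
      fun y hy => (bump_support hy).le
    refine (closure_minimal hsupp isClosed_closedBall).trans ?_
    intro y hy
    rw [mem_closedBall] at hy
    rw [mem_ball]
    calc dist y z ≤ dist y q + dist q z := dist_triangle _ _ _
      _ < 2*(0.1*r) + 0.9*r := add_lt_add_of_le_of_lt hy hqB'
      _ ≤ 1.1*r := by linarith
  have hIμφ : Integrable (bump (0.1*r) q) μ := lip1_integrable hd hr1.le hφq μ (hball_fin z _)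
  have hIνφ : Integrable (bump (0.1*r) q) ν := lip1_integrable hd hr1.le hφq ν (hνfin z _)
  have hνq : (ν (ball q (0.1*r))).toReal = c * ((0.1*r)^n * v) := by
    rw [hνdef, flatMeasure_ball_center hLplane.2 c hqL (by linarith : (0:ℝ) < 0.1*r)]
    rw [ENNReal.toReal_mul, ENNReal.toReal_mul, ENNReal.toReal_ofReal hc,
      ENNReal.toReal_ofReal (by positivity)]
  have hintφν : (0.1*r) * (c * ((0.1*r)^n * v)) ≤ ∫ y, bump (0.1*r) q y ∂ν := by
    rw [← hνq]
    calc (0.1*r) * (ν (ball q (0.1*r))).toReal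
        = ∫ _ in ball q (0.1*r), (0.1*r) ∂ν := by
          rw [setIntegral_const, smul_eq_mul, mul_comm]; rfl
      _ = ∫ y in ball q (0.1*r), bump (0.1*r) q y ∂ν := by
          apply setIntegral_congr_fun measurableSet_ball
          intro y hy
          exact (bump_eq_of_close (by linarith) hy).symm
      _ ≤ ∫ y, bump (0.1*r) q y ∂ν :=
          setIntegral_le_integral hIνφ
            (Filter.Eventually.of_forall fun y => bump_nonneg _ _ _)
  have hintφμ : ∫ y, bump (0.1*r) q y ∂μ ≤ (1.1*r) * N := by
    calc ∫ y, bump (0.1*r) q y ∂μ ≤ |∫ y, bump (0.1*r) q y ∂μ| := le_abs_self _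
      _ ≤ (1.1*r) * (μ (ball z (1.1*r))).toReal :=
          lip1_integral_abs_le hd hr1.le hφq μ (hball_fin z _)
      _ ≤ (1.1*r) * N := by
          apply mul_le_mul_of_nonneg_left _ hr1.le
          exact ENNReal.toReal_mono (hball_fin z _)
            (measure_mono (ball_subset_ball (by linarith)))
  have hdiffφ : |(∫ y, bump (0.1*r) q y ∂μ) - ∫ y, bump (0.1*r) q y ∂ν| ≤ F :=
    le_Fdist hd hr1.le μ ν (hball_fin z _) (hνfin z _) hφq
  have hcbound : c * ((0.1*r)^n * v) ≤ 22 * N := by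
    have h2 : ∫ y, bump (0.1*r) q y ∂ν ≤ (∫ y, bump (0.1*r) q y ∂μ) + F := by
      have h3 := (abs_le.1 hdiffφ).1
      linarith
    have h1 : (0.1*r) * (c * ((0.1*r)^n * v)) ≤ (0.1*r) * (22*N) := by
      have : (0.1*r) * (22*N) = (1.1*r)*N + (1.1*r)*N := by ring
      rw [this]
      linarith
    exact le_of_mul_le_mul_left h1 (by linarith)
  have hγr : (0:ℝ) < γ*r := by positivity
  have hsep : ∀ i j : ι, i ≠ j → 80*(γ*r) ≤ dist (x i) (x j) := by
    intro i j hij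
    have := two_radius_le_dist_of_disjoint
      (by positivity : (0:ℝ) < 10*(4*γ*r)) (hdisj hij)
    linarith
  have hdisjB : ∀ (i j : ι), i ≠ j →
      Disjoint (ball (x i) (4*γ*r)) (ball (x j) (4*γ*r)) := by
    intro i j hij
    exact (hdisj hij).mono (ball_subset_ball (by nlinarith)) (ball_subset_ball (by nlinarith))
  have hstrict : ENNReal.ofReal (c₁/2) * μ (ball z r) < ∑' i, μ (ball (x i) (4*γ*r)) := by
    refine lt_of_lt_of_le ?_ htsum
    apply ENNReal.mul_lt_mul_left hμB.ne' (hball_fin z r)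
    exact (ENNReal.ofReal_lt_ofReal_iff hc₁).2 (by linarith)
  rw [ENNReal.tsum_eq_iSup_sum] at hstrict
  obtain ⟨J, hJ⟩ := lt_iSup_iff.mp hstrict
  set m : ι → ℝ := fun i => (μ (ball (x i) (4*γ*r))).toReal with hmdef
  have hJsum : c₁/2 * M ≤ ∑ i ∈ J, m i := by
    have h1 : (ENNReal.ofReal (c₁/2) * μ (ball z r)).toReal = c₁/2 * M := by
      rw [ENNReal.toReal_mul, ENNReal.toReal_ofReal (by linarith)]
    rw [← h1, ← ENNReal.toReal_sum (fun i _ => hball_fin (x i) _)]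
    exact ENNReal.toReal_mono
      (ENNReal.sum_ne_top.2 fun i _ => hball_fin (x i) _) hJ.le
  have hJN : ∑ i ∈ J, m i ≤ N := by
    have hdisjJ : (J : Set ι).PairwiseDisjoint (fun i => ball (x i) (4*γ*r)) :=
      fun i _ j _ hij => hdisjB i j hij
    have h1 : ∑ i ∈ J, μ (ball (x i) (4*γ*r)) = μ (⋃ i ∈ J, ball (x i) (4*γ*r)) :=
      (measure_biUnion_finset hdisjJ fun i _ => measurableSet_ball).symm
    have h2 : (⋃ i ∈ J, ball (x i) (4*γ*r)) ⊆ ball z (3.3*r) := by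
      intro y hy
      simp only [mem_iUnion, exists_prop] at hy
      obtain ⟨i, _, hyi⟩ := hy
      rw [mem_ball] at *
      have hxiz := mem_ball.1 (hxB i)
      calc dist y z ≤ dist y (x i) + dist (x i) z := dist_triangle _ _ _
        _ < 4*γ*r + r := add_lt_add hyi hxiz
        _ ≤ 3.3*r := by nlinarith
    calc ∑ i ∈ J, m i = (∑ i ∈ J, μ (ball (x i) (4*γ*r))).toReal :=
          (ENNReal.toReal_sum (fun i _ => hball_fin (x i) _)).symm
      _ ≤ N := by
          rw [h1]
          exact ENNReal.toReal_mono (hball_fin z _) (measure_mono h2)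
  have hdens' : ∀ i : ι, c₁ * γ⁻¹ * (M/r^n) * (4*γ*r)^n ≤ m i := by
    intro i
    have h1 := hdens i
    rw [density, density] at h1
    rw [← le_div_iff₀ (by positivity : (0:ℝ) < (4*γ*r)^n)]
    exact h1
  have hsum_lip : LipschitzWith 1 (fun y => ∑ i ∈ J, bump (4*γ*r) (x i) y) := by
    apply lip_bump_sum J x (by positivity)
    intro i _ j _ hij
    have := hsep i j hij
    linarith
  have hbump_mem : ∀ i : ι, bump (4*γ*r) (x i) ∈ Lip1 (ball z (1.1*r)) := by
    intro i
    refine ⟨lip_bump _ _, ?_⟩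
    have hsupp : Function.support (bump (4*γ*r) (x i)) ⊆ closedBall (x i) (2*(4*γ*r)) :=
      fun y hy => (bump_support hy).le
    refine (closure_minimal hsupp isClosed_closedBall).trans ?_
    intro y hy
    rw [mem_closedBall] at hy
    have hxiz := mem_ball.1 (hxB i)
    rw [mem_ball]
    calc dist y z ≤ dist y (x i) + dist (x i) z := dist_triangle _ _ _
      _ < 2*(4*γ*r) + r := add_lt_add_of_le_of_lt hy hxiz
      _ ≤ 1.1*r := by nlinarith
  have hψmem : (fun y => ∑ i ∈ J, bump (4*γ*r) (x i) y) ∈ Lip1 (ball z (1.1*r)) := by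
    refine ⟨hsum_lip, ?_⟩
    have hsupp : Function.support (fun y => ∑ i ∈ J, bump (4*γ*r) (x i) y) ⊆
        ⋃ i ∈ J, closedBall (x i) (2*(4*γ*r)) := by
      intro y hy
      rw [Function.mem_support] at hy
      have h1 : ∃ i ∈ J, bump (4*γ*r) (x i) y ≠ 0 := by
        by_contra hcon
        push_neg at hcon
        exact hy (Finset.sum_eq_zero hcon)
      obtain ⟨i, hiJ, hi⟩ := h1
      exact mem_biUnion hiJ (mem_closedBall.2 (bump_support hi).le)
    have hclosed : IsClosed (⋃ i ∈ J, closedBall (x i) (2*(4*γ*r))) :=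
      J.finite_toSet.isClosed_biUnion (fun i _ => isClosed_closedBall)
    refine (closure_minimal hsupp hclosed).trans ?_
    intro y hy
    simp only [mem_iUnion, exists_prop] at hy
    obtain ⟨i, hiJ, hyi⟩ := hy
    rw [mem_closedBall] at hyi
    have hxiz := mem_ball.1 (hxB i)
    rw [mem_ball]
    calc dist y z ≤ dist y (x i) + dist (x i) z := dist_triangle _ _ _
      _ < 2*(4*γ*r) + r := add_lt_add_of_le_of_lt hyi hxiz
      _ ≤ 1.1*r := by nlinarith
  have hIμb : ∀ i : ι, Integrable (bump (4*γ*r) (x i)) μ :=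
    fun i => lip1_integrable hd hr1.le (hbump_mem i) μ (hball_fin z _)
  have hIνb : ∀ i : ι, Integrable (bump (4*γ*r) (x i)) ν :=
    fun i => lip1_integrable hd hr1.le (hbump_mem i) ν (hνfin z _)
  have hlow : ∀ i : ι, (4*γ*r) * m i ≤ ∫ y, bump (4*γ*r) (x i) y ∂μ := by
    intro i
    calc (4*γ*r) * m i = ∫ _ in ball (x i) (4*γ*r), (4*γ*r) ∂μ := by
          rw [setIntegral_const, smul_eq_mul, mul_comm]; rfl
      _ = ∫ y in ball (x i) (4*γ*r), bump (4*γ*r) (x i) y ∂μ := by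
          apply setIntegral_congr_fun measurableSet_ball
          intro y hy
          exact (bump_eq_of_close (by positivity) hy).symm
      _ ≤ ∫ y, bump (4*γ*r) (x i) y ∂μ :=
          setIntegral_le_integral (hIμb i)
            (Filter.Eventually.of_forall fun y => bump_nonneg _ _ _)
  have hflat : ∀ i : ι, (ν (ball (x i) (2*(4*γ*r)))).toReal ≤ c * ((16*γ*r)^n * v) := by
    intro i
    have h1 : ν (ball (x i) (2*(4*γ*r))) ≤
        ENNReal.ofReal c * (ENNReal.ofReal ((2*(2*(4*γ*r)))^n) * VB n) := by
      rw [hνdef]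
      exact flatMeasure_ball_le hLplane.2 c (x i) (by positivity)
    have h2 := ENNReal.toReal_mono (ENNReal.mul_ne_top ENNReal.ofReal_ne_top
      (ENNReal.mul_ne_top ENNReal.ofReal_ne_top (VB_lt_top n).ne)) h1
    rw [ENNReal.toReal_mul, ENNReal.toReal_mul, ENNReal.toReal_ofReal hc,
      ENNReal.toReal_ofReal (by positivity)] at h2
    calc (ν (ball (x i) (2*(4*γ*r)))).toReal ≤ c * ((2*(2*(4*γ*r)))^n * v) := h2
      _ = c * ((16*γ*r)^n * v) := by
          rw [show (2:ℝ)*(2*(4*γ*r)) = 16*γ*r by ring]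
  have hup : ∀ i : ι, ∫ y, bump (4*γ*r) (x i) y ∂ν ≤ (4*γ*r) * (K₈ * γ * m i) := by
    intro i
    have hstep1 : ∫ y, bump (4*γ*r) (x i) y ∂ν ≤
        (4*γ*r) * (ν (ball (x i) (2*(4*γ*r)))).toReal := by
      have hind : (ball (x i) (2*(4*γ*r))).indicator (bump (4*γ*r) (x i)) =
          bump (4*γ*r) (x i) :=
        indicator_eq_self.2 (fun y hy => mem_ball.2 (bump_support hy))
      conv_lhs => rw [← hind]
      rw [integral_indicator measurableSet_ball]
      calc ∫ y in ball (x i) (2*(4*γ*r)), bump (4*γ*r) (x i) y ∂ν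
          ≤ |∫ y in ball (x i) (2*(4*γ*r)), bump (4*γ*r) (x i) y ∂ν| := le_abs_self _
        _ ≤ (4*γ*r) * (ν (ball (x i) (2*(4*γ*r)))).toReal := by
            rw [← Real.norm_eq_abs]
            apply norm_setIntegral_le_of_norm_le_const
              (lt_top_iff_ne_top.2 (hνfin _ _))
            intro y _
            rw [Real.norm_eq_abs, abs_of_nonneg (bump_nonneg _ _ _)]
            exact bump_le (by positivity) _ _
    refine hstep1.trans ?_
    apply mul_le_mul_of_nonneg_left _ (by positivity)
    refine (hflat i).trans ?_
    have hkey : c * ((16*γ*r)^n * v) ≤ 22*C₀*M * (160*γ)^n := by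
      have h16 : (16*γ*r:ℝ)^n = (0.1*r)^n * (160*γ)^n := by
        rw [← mul_pow]
        congr 1
        ring
      rw [h16]
      calc c * ((0.1*r)^n * (160*γ)^n * v) = (c*((0.1*r)^n*v)) * (160*γ)^n := by ring
        _ ≤ (22*N) * (160*γ)^n := mul_le_mul_of_nonneg_right hcbound (by positivity)
        _ ≤ 22*C₀*M * (160*γ)^n := by
            apply mul_le_mul_of_nonneg_right _ (by positivity)
            linarith
    refine hkey.trans ?_
    have heq : K₈ * γ * (c₁ * γ⁻¹ * (M/r^n) * (4*γ*r)^n) = 22*C₀*M * (160*γ)^n := by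
      rw [hK₈def]
      have h4 : (4*γ*r:ℝ)^n = 4^n*γ^n*r^n := by rw [← mul_pow, ← mul_pow]
      have h160 : (160*γ:ℝ)^n = 160^n*γ^n := by rw [← mul_pow]
      have h164 : (160:ℝ)^n = 40^n*4^n := by rw [← mul_pow]; norm_num
      rw [h4, h160, h164]
      field_simp
    calc 22*C₀*M*(160*γ)^n = K₈ * γ * (c₁ * γ⁻¹ * (M/r^n) * (4*γ*r)^n) := heq.symm
      _ ≤ K₈ * γ * m i := mul_le_mul_of_nonneg_left (hdens' i) (by positivity)
  have hψμ : (4*γ*r) * (c₁/2 * M) ≤ ∫ y, (∑ i ∈ J, bump (4*γ*r) (x i) y) ∂μ := by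
    rw [integral_finset_sum J (fun i _ => hIμb i)]
    calc (4*γ*r) * (c₁/2*M) ≤ (4*γ*r) * ∑ i ∈ J, m i :=
          mul_le_mul_of_nonneg_left hJsum (by positivity)
      _ = ∑ i ∈ J, (4*γ*r) * m i := Finset.mul_sum _ _ _
      _ ≤ ∑ i ∈ J, ∫ y, bump (4*γ*r) (x i) y ∂μ := Finset.sum_le_sum fun i _ => hlow i
  have hψν : ∫ y, (∑ i ∈ J, bump (4*γ*r) (x i) y) ∂ν ≤ (4*γ*r) * (K₈*γ*N) := by
    rw [integral_finset_sum J (fun i _ => hIνb i)]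
    calc ∑ i ∈ J, ∫ y, bump (4*γ*r) (x i) y ∂ν ≤ ∑ i ∈ J, (4*γ*r)*(K₈*γ*(m i)) :=
          Finset.sum_le_sum fun i _ => hup i
      _ = (4*γ*r)*(K₈*γ*(∑ i ∈ J, m i)) := by
          rw [Finset.mul_sum, Finset.mul_sum]
      _ ≤ (4*γ*r)*(K₈*γ*N) := by
          apply mul_le_mul_of_nonneg_left _ (by positivity)
          exact mul_le_mul_of_nonneg_left hJN (by positivity)
  have hFlow : γ*r*c₁*M ≤ F := by
    have hdiff := le_Fdist hd hr1.le μ ν (hball_fin z _) (hνfin z _) hψmem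
    have h1 : (∫ y, (∑ i ∈ J, bump (4*γ*r) (x i) y) ∂μ) -
        (∫ y, (∑ i ∈ J, bump (4*γ*r) (x i) y) ∂ν) ≤ F :=
      le_trans (le_abs_self _) hdiff
    have h2 : K₈*γ*N ≤ K₇*γ*M := by
      rw [hK₇def]
      calc K₈*γ*N ≤ K₈*γ*(C₀*M) := mul_le_mul_of_nonneg_left hNC₀M (by positivity)
        _ = K₈*C₀*γ*M := by ring
    have h3 : K₇*γ*M ≤ c₁/4*M := by
      apply mul_le_mul_of_nonneg_right _ hM.le
      calc K₇*γ = K₇*γ := rfl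
        _ ≤ c₁/4 := hγK₇
    have h4 : (4*γ*r) * (K₈*γ*N) ≤ (4*γ*r) * (c₁/4*M) := by
      apply mul_le_mul_of_nonneg_left _ (by positivity)
      linarith
    have h5 : (4*γ*r) * (c₁/2*M) - (4*γ*r) * (c₁/4*M) = γ*r*c₁*M := by ring
    linarith
  rw [hAF, lt_div_iff₀ (by positivity)]
  calc c₁/(2*C₀)*γ*((1.1*r)*N) ≤ c₁/(2*C₀)*γ*((1.1*r)*(C₀*M)) := by
        apply mul_le_mul_of_nonneg_left _ (by positivity)
        exact mul_le_mul_of_nonneg_left hNC₀M (by linarith)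
    _ = 0.55*(γ*r*c₁*M) := by field_simp; ring
    _ < γ*r*c₁*M := by nlinarith [mul_pos (mul_pos (mul_pos hγ hr) hc₁) hM]
    _ ≤ F := hFlow


end
end

section
/- Let L₁, L₂ be affine n-planes in ℝ^d and let B be a ball. Suppose x_α ∈ L₁ ∩ B̄ satisfies dist(x_α, L₂) = inf{ dist(x, L₂) : x ∈ L₁ ∩ B }, and let x_β ∈ L₂ be the nearest point of L₂ to x_α, i.e. |x_α − x_β| = dist(x_α, L₂). Denote by Π^⊥ the orthogonal projection onto the orthogonal complement of the direction space of L₂. Then for every x ∈ L₁ ∩ B: dist(x, L₂) = |Π^⊥(x − x_α) − (x_β − x_α)|, and moreover dist(x, L₂) ≤ |x_α − x_β| + |Π^⊥(x − x_α)| ≤ 3 dist(x, L₂). -/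
open MeasureTheory Metric Set

noncomputable section

/-- The orthogonal projection onto the orthogonal complement of the direction space of
an affine subspace `L`, viewed as a map `ℝ^d → ℝ^d`. -/
noncomputable def perpProj {d : ℕ} (L : AffineSubspace ℝ (Euc d)) (x : Euc d) : Euc d :=
  (Submodule.orthogonalProjection L.directionᗮ x : Euc d)

section Aux

set_option linter.unusedSectionVars false

variable {d : ℕ} (L : AffineSubspace ℝ (Euc d)) [Nonempty L]

/-- infDist to an affine subspace equals distance to the orthogonal projection. -/
lemma infDist_eq_dist_proj (x : Euc d) :
    Metric.infDist x (L : Set (Euc d)) =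
      dist x (EuclideanGeometry.orthogonalProjection L x : Euc d) := by
  apply le_antisymm
  · exact Metric.infDist_le_dist_of_mem (EuclideanGeometry.orthogonalProjection_mem x)
  · rw [Metric.infDist_eq_iInf]
    have hne : Nonempty ((L : Set (Euc d)) : Type _) :=
      ⟨⟨_, EuclideanGeometry.orthogonalProjection_mem x⟩⟩
    apply le_ciInf
    intro q
    have hq : (q : Euc d) ∈ L := q.2
    have h := EuclideanGeometry.dist_sq_eq_dist_orthogonalProjection_sq_add_dist_orthogonalProjection_sq
      (s := L) x hq
    have h0 : 0 ≤ dist x (q : Euc d) := dist_nonneg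
    have h1 : 0 ≤ dist x (EuclideanGeometry.orthogonalProjection L x : Euc d) := dist_nonneg
    have h2 := dist_comm (q : Euc d) x
    nlinarith

lemma perpProj_of_mem_orth {v : Euc d} (hv : v ∈ L.directionᗮ) : perpProj L v = v := by
  exact Submodule.starProjection_eq_self_iff.2 hv

lemma perpProj_of_mem_dir {v : Euc d} (hv : v ∈ L.direction) : perpProj L v = 0 := by
  have : v ∈ L.directionᗮᗮ := Submodule.le_orthogonal_orthogonal _ hv
  simp [perpProj, Submodule.orthogonalProjectionOnto_apply_of_mem_orthogonal this]

lemma infDist_eq_perpProj (x y : Euc d) (hy : y ∈ L) :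
    Metric.infDist x (L : Set (Euc d)) = ‖perpProj L (x - y)‖ := by
  set p : Euc d := (EuclideanGeometry.orthogonalProjection L x : Euc d) with hp
  have hxp : x - p ∈ L.directionᗮ := by
    simpa [vsub_eq_sub] using EuclideanGeometry.vsub_orthogonalProjection_mem_direction_orthogonal L x
  have hpy : p - y ∈ L.direction := by
    simpa [vsub_eq_sub] using
      AffineSubspace.vsub_mem_direction (EuclideanGeometry.orthogonalProjection_mem (s := L) x) hy
  have hsplit : x - y = (x - p) + (p - y) := by abel
  have : perpProj L (x - y) = x - p := by
    have hadd : perpProj L ((x - p) + (p - y)) = perpProj L (x - p) + perpProj L (p - y) := by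
      simp [perpProj, map_add]
    rw [hsplit, hadd, perpProj_of_mem_orth L hxp, perpProj_of_mem_dir L hpy, add_zero]
  rw [this, infDist_eq_dist_proj, dist_eq_norm]

lemma nearest_eq_proj (x y : Euc d) (hy : y ∈ L)
    (h : ‖x - y‖ = Metric.infDist x (L : Set (Euc d))) :
    y = (EuclideanGeometry.orthogonalProjection L x : Euc d) := by
  set p : Euc d := (EuclideanGeometry.orthogonalProjection L x : Euc d) with hp
  have h1 : dist x y = dist x p := by
    rw [dist_eq_norm, h, infDist_eq_dist_proj]
  have h2 := EuclideanGeometry.dist_sq_eq_dist_orthogonalProjection_sq_add_dist_orthogonalProjection_sq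
    (s := L) x hy
  rw [← hp] at h2
  have hcomm := dist_comm y x
  have hsq : dist y x * dist y x = dist x p * dist x p := by rw [hcomm, h1]
  have hz : dist y p * dist y p = 0 := by linarith
  have : dist y p = 0 := mul_self_eq_zero.1 hz
  exact dist_eq_zero.1 this

end Aux

/-- Let `L₁, L₂` be affine `n`-planes, `B` a ball, `x_α ∈ L₁ ∩ B̄`
realizing `inf { dist(x, L₂) : x ∈ L₁ ∩ B }`, and `x_β ∈ L₂` a nearest point of `L₂` to
`x_α`. Then for every `x ∈ L₁ ∩ B`:
`dist(x, L₂) = |Π^⊥(x − x_α) − (x_β − x_α)|` and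
`dist(x, L₂) ≤ |x_α − x_β| + |Π^⊥(x − x_α)| ≤ 3 dist(x, L₂)`. -/
theorem statement16 (n d : ℕ) (hn : 1 ≤ n) (hnd : n ≤ d)
    (L₁ L₂ : AffineSubspace ℝ (Euc d))
    (h₁ : IsAffinePlane n L₁) (h₂ : IsAffinePlane n L₂)
    (z : Euc d) (ρ : ℝ) (hρ : 0 < ρ)
    (xα : Euc d) (hxα : xα ∈ (L₁ : Set (Euc d)) ∩ closedBall z ρ)
    (hmin : Metric.infDist xα (L₂ : Set (Euc d)) =
      sInf { t | ∃ x ∈ (L₁ : Set (Euc d)) ∩ ball z ρ, t = Metric.infDist x (L₂ : Set (Euc d)) })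
    (xβ : Euc d) (hxβ : xβ ∈ (L₂ : Set (Euc d)))
    (hnear : ‖xα - xβ‖ = Metric.infDist xα (L₂ : Set (Euc d))) :
    ∀ x ∈ (L₁ : Set (Euc d)) ∩ ball z ρ,
      Metric.infDist x (L₂ : Set (Euc d)) =
        ‖perpProj L₂ (x - xα) - (xβ - xα)‖ ∧
      Metric.infDist x (L₂ : Set (Euc d)) ≤ ‖xα - xβ‖ + ‖perpProj L₂ (x - xα)‖ ∧
      ‖xα - xβ‖ + ‖perpProj L₂ (x - xα)‖ ≤ 3 * Metric.infDist x (L₂ : Set (Euc d)) := by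
  intro x hx
  haveI : Nonempty L₂ := h₂.1.to_subtype
  -- xβ is the orthogonal projection of xα onto L₂
  have hxaβ : xβ = (EuclideanGeometry.orthogonalProjection L₂ xα : Euc d) :=
    nearest_eq_proj L₂ xα xβ hxβ hnear
  have hmemorth : xα - xβ ∈ L₂.directionᗮ := by
    rw [hxaβ]
    simpa [vsub_eq_sub] using
      EuclideanGeometry.vsub_orthogonalProjection_mem_direction_orthogonal L₂ xα
  have hmemorth' : xβ - xα ∈ L₂.directionᗮ := by
    have := Submodule.neg_mem _ hmemorth
    simpa using this
  have key : Metric.infDist x (L₂ : Set (Euc d)) = ‖perpProj L₂ (x - xβ)‖ :=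
    infDist_eq_perpProj L₂ x xβ hxβ
  have hsplit : perpProj L₂ (x - xβ) = perpProj L₂ (x - xα) - (xβ - xα) := by
    have hd : x - xβ = (x - xα) + (xα - xβ) := by abel
    have hadd : perpProj L₂ ((x - xα) + (xα - xβ))
        = perpProj L₂ (x - xα) + perpProj L₂ (xα - xβ) := by
      simp [perpProj, map_add]
    rw [hd, hadd, perpProj_of_mem_orth L₂ hmemorth]
    abel
  have eq1 : Metric.infDist x (L₂ : Set (Euc d))
      = ‖perpProj L₂ (x - xα) - (xβ - xα)‖ := by rw [key, hsplit]
  refine ⟨eq1, ?_, ?_⟩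
  · have htr : ‖perpProj L₂ (x - xα) - (xβ - xα)‖
        ≤ ‖perpProj L₂ (x - xα)‖ + ‖xβ - xα‖ := norm_sub_le _ _
    have hrev : ‖xβ - xα‖ = ‖xα - xβ‖ := norm_sub_rev _ _
    rw [eq1]
    linarith
  · -- xα minimizes infDist over L₁ ∩ B
    have hα_le : Metric.infDist xα (L₂ : Set (Euc d)) ≤ Metric.infDist x (L₂ : Set (Euc d)) := by
      rw [hmin]
      apply csInf_le
      · exact ⟨0, fun t ht => by
          obtain ⟨y, hy, rfl⟩ := ht
          exact Metric.infDist_nonneg⟩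
      · exact ⟨x, hx, rfl⟩
    have hβle : ‖xα - xβ‖ ≤ Metric.infDist x (L₂ : Set (Euc d)) := by
      rw [hnear]; exact hα_le
    have hperp : ‖perpProj L₂ (x - xα)‖
        ≤ Metric.infDist x (L₂ : Set (Euc d)) + ‖xα - xβ‖ := by
      have hd : x - xα = (x - xβ) + (xβ - xα) := by abel
      have hadd : perpProj L₂ ((x - xβ) + (xβ - xα))
          = perpProj L₂ (x - xβ) + perpProj L₂ (xβ - xα) := by
        simp [perpProj, map_add]
      have h3 : perpProj L₂ (x - xα) = perpProj L₂ (x - xβ) + (xβ - xα) := by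
        rw [hd, hadd, perpProj_of_mem_orth L₂ hmemorth']
      rw [h3]
      have := norm_add_le (perpProj L₂ (x - xβ)) (xβ - xα)
      have hrev : ‖xβ - xα‖ = ‖xα - xβ‖ := norm_sub_rev _ _
      rw [← key] at this
      linarith
    linarith

end
end
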